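/- Let Σ be a 4×4 real symmetric positive definite matrix and set I₂ = -tr[(ΣJ₄)²]/2. Then the eigenemittances of Σ are given by ε_{1,2} = √(I₂/2 ± √((I₂/2)² − det Σ)); in particular (I₂/2)² ≥ det Σ, ε₁²+ε₂² = I₂ and ε₁²ε₂² = det Σ. -/

import Mathlib

open Matrix Polynomial

noncomputable section

/-- The 2×2 standard symplectic matrix. -/
def J2 : Matrix (Fin 2) (Fin 2) ℝ := !![0, 1; -1, 0]

/-- The 2n×2n block-diagonal symplectic matrix `diag(J₂, ..., J₂)`. -/
def Jblock (n : ℕ) : Matrix (Fin (2 * n)) (Fin (2 * n)) ℝ :=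
  fun i j =>
    if i.val / 2 = j.val / 2 then
      J2 ⟨i.val % 2, by omega⟩ ⟨j.val % 2, by omega⟩
    else 0

/-- The 2×2 block of a 2n×2n matrix at block position (m, k). -/
def blk {n : ℕ} (A : Matrix (Fin (2 * n)) (Fin (2 * n)) ℝ) (m k : Fin n) :
    Matrix (Fin 2) (Fin 2) ℝ :=
  fun i j =>
    A ⟨2 * m.val + i.val, by have := m.isLt; have := i.isLt; omega⟩
      ⟨2 * k.val + j.val, by have := k.isLt; have := j.isLt; omega⟩

/-- `S` has eigenemittances `ε`: the spectrum of `S · J_{2n}` (over ℂ, with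
multiplicity) is `±iε₁, ..., ±iε_n`. -/
def hasEigenemittances {n : ℕ} (S : Matrix (Fin (2 * n)) (Fin (2 * n)) ℝ)
    (ε : Fin n → ℝ) : Prop :=
  ((S * Jblock n).map (Complex.ofReal)).charpoly =
    ∏ m : Fin n, ((X - C (Complex.I * (ε m : ℂ))) * (X + C (Complex.I * (ε m : ℂ))))

set_option maxHeartbeats 1000000 in
lemma det_fin_four' {R : Type*} [CommRing R] (M : Matrix (Fin 4) (Fin 4) R) :
    M.det =
      M 0 0 * M 1 1 * M 2 2 * M 3 3 - M 0 0 * M 1 1 * M 2 3 * M 3 2 -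
        M 0 0 * M 1 2 * M 2 1 * M 3 3 + M 0 0 * M 1 2 * M 2 3 * M 3 1 +
        M 0 0 * M 1 3 * M 2 1 * M 3 2 - M 0 0 * M 1 3 * M 2 2 * M 3 1 -
        M 0 1 * M 1 0 * M 2 2 * M 3 3 + M 0 1 * M 1 0 * M 2 3 * M 3 2 +
        M 0 1 * M 1 2 * M 2 0 * M 3 3 - M 0 1 * M 1 2 * M 2 3 * M 3 0 -
        M 0 1 * M 1 3 * M 2 0 * M 3 2 + M 0 1 * M 1 3 * M 2 2 * M 3 0 +
        M 0 2 * M 1 0 * M 2 1 * M 3 3 - M 0 2 * M 1 0 * M 2 3 * M 3 1 -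
        M 0 2 * M 1 1 * M 2 0 * M 3 3 + M 0 2 * M 1 1 * M 2 3 * M 3 0 +
        M 0 2 * M 1 3 * M 2 0 * M 3 1 - M 0 2 * M 1 3 * M 2 1 * M 3 0 -
        M 0 3 * M 1 0 * M 2 1 * M 3 2 + M 0 3 * M 1 0 * M 2 2 * M 3 1 +
        M 0 3 * M 1 1 * M 2 0 * M 3 2 - M 0 3 * M 1 1 * M 2 2 * M 3 0 -
        M 0 3 * M 1 2 * M 2 0 * M 3 1 + M 0 3 * M 1 2 * M 2 1 * M 3 0 := by
  rw [Matrix.det_succ_row_zero, Fin.sum_univ_four]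
  norm_num [Matrix.det_fin_three, Fin.sum_univ_succ]
  have h1 : (Fin.succ 2 : Fin 4) = 3 := rfl
  have h2 : Fin.succAbove (1:Fin 4) (2:Fin 3) = 3 := rfl
  have h3 : Fin.succAbove (2:Fin 4) (0:Fin 3) = 0 := rfl
  have h4 : Fin.succAbove (2:Fin 4) (1:Fin 3) = 1 := rfl
  have h5 : Fin.succAbove (2:Fin 4) (2:Fin 3) = 3 := rfl
  have h6 : Fin.succAbove (3:Fin 4) (0:Fin 3) = 0 := rfl
  have h7 : Fin.succAbove (3:Fin 4) (1:Fin 3) = 1 := rfl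
  have h8 : Fin.succAbove (3:Fin 4) (2:Fin 3) = 2 := rfl
  have h9 : ((3:Fin 4) : ℕ) = 3 := rfl
  rw [h1,h2,h3,h4,h5,h6,h7,h8]
  norm_num
  ring

lemma eval_charpoly4 (M : Matrix (Fin 4) (Fin 4) ℂ) (t : ℂ) :
    (M.charpoly).eval t = (t • (1 : Matrix (Fin 4) (Fin 4) ℂ) - M).det := by
  rw [Matrix.charpoly, ← Polynomial.coe_evalRingHom, RingHom.map_det]
  congr 1
  ext i j
  by_cases h : i = j
  · subst h; simp [charmatrix_apply_eq]
  · simp [charmatrix_apply_ne _ _ _ h, Matrix.one_apply_ne h]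

set_option maxHeartbeats 1000000 in
lemma trace_sq4 (M : Matrix (Fin 4) (Fin 4) ℂ) :
    (M ^ 2).trace = M.trace ^ 2 -
      ((M.charpoly).eval 1 + (M.charpoly).eval (-1) - 2 - 2 * (M.charpoly).eval 0) := by
  rw [eval_charpoly4, eval_charpoly4, eval_charpoly4, det_fin_four', det_fin_four',
    det_fin_four']
  simp only [Matrix.trace, Matrix.diag, pow_two, Matrix.mul_apply,
    Matrix.sub_apply, Matrix.smul_apply, Matrix.one_apply, Fin.sum_univ_four]
  norm_num [Fin.ext_iff, show ((3:Fin 4):ℕ)=3 from rfl, show ((2:Fin 4):ℕ)=2 from rfl,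
    show ((1:Fin 4):ℕ)=1 from rfl, show ((0:Fin 4):ℕ)=0 from rfl]
  ring

lemma det_Jblock_two : (Jblock 2).det = 1 := by
  have hJ : Jblock 2 = !![0,1,0,0; -1,0,0,0; 0,0,0,1; 0,0,-1,0] := by
    ext i j
    fin_cases i <;> fin_cases j <;> rfl
  rw [hJ, det_fin_four']
  norm_num [Matrix.cons_val_zero, Matrix.cons_val_one, Matrix.head_cons, Matrix.cons_val_two, Matrix.cons_val_three, Matrix.tail_cons, Matrix.vecHead, Matrix.vecTail]

/-- Explicit formula for the eigenemittances of a 4×4 beam matrix in terms of the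
invariant `I₂ = -tr[(ΣJ₄)²]/2` and `det Σ`. -/
theorem stmt17 (S : Matrix (Fin (2 * 2)) (Fin (2 * 2)) ℝ) (hS : S.PosDef)
    (ε₁ ε₂ : ℝ) (hord : ε₂ ≤ ε₁) (hpos : 0 < ε₂)
    (hε : hasEigenemittances S ![ε₁, ε₂])
    (I₂ : ℝ) (hI : I₂ = -((S * Jblock 2) ^ 2).trace / 2) :
    (I₂ / 2) ^ 2 ≥ S.det ∧
    ε₁ = Real.sqrt (I₂ / 2 + Real.sqrt ((I₂ / 2) ^ 2 - S.det)) ∧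
    ε₂ = Real.sqrt (I₂ / 2 - Real.sqrt ((I₂ / 2) ^ 2 - S.det)) ∧
    ε₁ ^ 2 + ε₂ ^ 2 = I₂ ∧
    ε₁ ^ 2 * ε₂ ^ 2 = S.det := by
  -- set up the complex matrix
  set A : Matrix (Fin (2*2)) (Fin (2*2)) ℝ := S * Jblock 2 with hA
  unfold hasEigenemittances at hε
  -- the explicit characteristic polynomial
  have hI2 : (C Complex.I : ℂ[X])^2 = -1 := by
    rw [← Polynomial.C_pow, Complex.I_sq, Polynomial.C_neg, Polynomial.C_1]
  have hP : (A.map Complex.ofReal).charpoly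
      = X^4 + C ((ε₁:ℂ)^2 + (ε₂:ℂ)^2) * X^2 + C ((ε₁:ℂ)^2 * (ε₂:ℂ)^2) := by
    rw [hε, Fin.prod_univ_two]
    simp only [Matrix.cons_val_zero, Matrix.cons_val_one, Matrix.head_cons,
      Polynomial.C_mul, Polynomial.C_add, Polynomial.C_pow]
    linear_combination (-(C (ε₁:ℂ)^2 + C (ε₂:ℂ)^2) * (X:ℂ[X])^2
      + ((C (Complex.I:ℂ))^2 - 1) * (C (ε₁:ℂ)^2 * C (ε₂:ℂ)^2)) * hI2
  -- evaluations of the characteristic polynomial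
  have heval : ∀ t : ℂ, ((A.map Complex.ofReal).charpoly).eval t
      = t^4 + ((ε₁:ℂ)^2 + (ε₂:ℂ)^2) * t^2 + (ε₁:ℂ)^2 * (ε₂:ℂ)^2 := by
    intro t; rw [hP]; simp
  -- trace of M is zero
  have hcard : Fintype.card (Fin (2*2)) - 1 = 3 := rfl
  have htr0 : (A.map Complex.ofReal).trace = 0 := by
    have := Matrix.trace_eq_neg_charpoly_coeff (A.map Complex.ofReal)
    rw [hcard, hP] at this
    rw [this]
    simp only [coeff_add, coeff_C_mul, coeff_X_pow, coeff_C]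
    norm_num
  -- determinant relation
  have hdetM : (A.map Complex.ofReal).det = ((ε₁:ℂ)^2 * (ε₂:ℂ)^2) := by
    have h0 := heval 0
    rw [eval_charpoly4 (A.map Complex.ofReal) 0] at h0
    norm_num [Matrix.det_neg] at h0
    exact h0
  have hdetS : S.det = ε₁^2 * ε₂^2 := by
    have h1 : (A.map Complex.ofReal).det = ((A.det : ℝ) : ℂ) :=
      (RingHom.map_det Complex.ofRealHom A).symm
    have h2 : A.det = S.det * (Jblock 2).det := Matrix.det_mul _ _
    rw [h1, h2, det_Jblock_two, mul_one] at hdetM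
    exact_mod_cast hdetM
  -- trace of M² gives the sum of squares
  have htrsq : ((A ^ 2).trace : ℂ) = -2 * ((ε₁:ℂ)^2 + (ε₂:ℂ)^2) := by
    have hmap : ((A ^ 2).map Complex.ofReal) = (A.map Complex.ofReal) ^ 2 := by
      ext i j
      simp [pow_two, Matrix.mul_apply, Matrix.map_apply]
    have htrmap : ((A ^ 2).map Complex.ofReal).trace = ((A ^ 2).trace : ℂ) := by
      simp [Matrix.trace, Matrix.diag, Matrix.map_apply]
    have := trace_sq4 (A.map Complex.ofReal)
    rw [← hmap, htrmap, htr0, heval 1, heval (-1), heval 0] at this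
    rw [this]; ring
  have hsum : ε₁^2 + ε₂^2 = I₂ := by
    have : ((A ^ 2).trace : ℂ) = ((-2 * (ε₁^2 + ε₂^2) : ℝ) : ℂ) := by
      rw [htrsq]; push_cast; ring
    have h := Complex.ofReal_injective this
    rw [hI, h]; ring
  -- final real computation
  have hb : (0:ℝ) < ε₂^2 := by positivity
  have hba : ε₂^2 ≤ ε₁^2 := by nlinarith
  have hkey : (I₂ / 2) ^ 2 - S.det = ((ε₁^2 - ε₂^2)/2)^2 := by
    rw [hdetS, ← hsum]; ring
  have hsqrt : Real.sqrt ((I₂ / 2) ^ 2 - S.det) = (ε₁^2 - ε₂^2)/2 := by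
    rw [hkey]
    exact Real.sqrt_sq (by linarith)
  refine ⟨by nlinarith, ?_, ?_, hsum, hdetS.symm⟩
  · rw [hsqrt, show I₂/2 + (ε₁^2 - ε₂^2)/2 = ε₁^2 by rw [← hsum]; ring,
      Real.sqrt_sq (by linarith)]
  · rw [hsqrt, show I₂/2 - (ε₁^2 - ε₂^2)/2 = ε₂^2 by rw [← hsum]; ring,
      Real.sqrt_sq (by linarith)]
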